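/- arXiv:2505.12687 — 2 statements merged into one kernel-verified Lean document; each statement's English description precedes it below -/
import Mathlib

section
/- Let k ≥ 2, q ≥ 3, and r > 2k be integers, and let n be a positive integer divisible by q!. Then for every j with 0 ≤ j ≤ rqn, the rational number C_{n,j} is an integer. -/
open Finset

/-- Pochhammer symbol `(x)_m = x(x+1)⋯(x+m−1)` over ℝ. -/
noncomputable def poch (x : ℝ) (m : ℕ) : ℝ := ∏ i ∈ Finset.range m, (x + i)

/-- The coefficients `C_{n,j}` of the partial fraction decomposition of `R_n`. -/
noncomputable def Cnj (k q r n j : ℕ) : ℝ :=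
  (-1 : ℝ) ^ j * (Nat.choose (r * q * n) j) * ((r * q * n : ℝ) - 2 * j) ^ (1 - k % 2) *
    (q : ℝ) ^ (2 * k * q * n) *
    (∏ p ∈ Nat.primeFactors q, (p : ℝ) ^ (2 * k * q * n / (p - 1))) *
    (poch (-(j : ℝ) / q - (q : ℝ) * n) (q * n)) ^ k *
    (poch (-(j : ℝ) / q + (r : ℝ) * n + 1) (q * n)) ^ k /
    ((Nat.factorial (q * n) : ℝ)) ^ (2 * k)

/-- `ρ_{n,0}`. -/
noncomputable def rho0 (k q r n : ℕ) : ℝ :=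
  ((-1 : ℝ) ^ k / q) *
    ((∑ j ∈ Finset.Icc 1 (r * n), ∑ m ∈ Finset.Icc 1 j, Cnj k q r n (q * j) / (m : ℝ) ^ k) +
      ∑ a ∈ Finset.Icc 1 (q - 1), ∑ j ∈ Finset.range (r * n), ∑ m ∈ Finset.range (j + 1),
        Cnj k q r n (q * j + a) / ((m : ℝ) + (a : ℝ) / q) ^ k)

/-- `ρ_{n,a/q}` for `1 ≤ a < q`. -/
noncomputable def rhoA (k q r n a : ℕ) : ℝ :=
  ((-1 : ℝ) ^ (k - 1) / q) * ∑ j ∈ Finset.range (r * n), Cnj k q r n (q * j + a)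

/-- `ρ_{n,1}`. -/
noncomputable def rho1 (k q r n : ℕ) : ℝ :=
  ((-1 : ℝ) ^ (k - 1) / q) * (∑ j ∈ Finset.range (r * n + 1), Cnj k q r n (q * j)) +
    (if Even q then (1 : ℝ) else 0) * (2 ^ k - 1) * rhoA k q r n (q / 2)


open Nat

lemma prod_range_eq_ascFactorial (b m : ℕ) :
    ∏ i ∈ Finset.range m, (b + i) = b.ascFactorial m := by
  induction m with
  | zero => simp
  | succ m ih => rw [Finset.prod_range_succ, ih, Nat.ascFactorial_succ, mul_comm]

lemma fact_le_AP (p q c m : ℕ) (hp : p.Prime) (hpq : ¬ p ∣ q) (hc : 0 < c) :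
    (m !).factorization p ≤ (∏ i ∈ Finset.range m, (c + q * i)).factorization p := by
  set N := c + q * m with hN
  have hN1 : 1 ≤ N := le_trans hc (Nat.le_add_right _ _)
  have hcop : Nat.Coprime q (p ^ N) :=
    (Nat.Coprime.pow_right N (((Nat.Prime.coprime_iff_not_dvd hp).mpr hpq).symm))
  have hpN1 : 1 < p ^ N := Nat.one_lt_pow (by omega) hp.one_lt
  obtain ⟨u, -, hu⟩ := Nat.exists_mul_mod_eq_one_of_coprime hcop hpN1
  have hu0 : 0 < u := by
    rcases Nat.eq_zero_or_pos u with h | h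
    · rw [h] at hu; simp at hu
    · exact h
  obtain ⟨s, hs⟩ : ∃ s, q * u = s * p ^ N + 1 :=
    ⟨q * u / p ^ N, by rw [← hu]; exact (Nat.div_add_mod' _ _).symm⟩
  have hsZ : (q:ℤ) * u = s * (p:ℤ) ^ N + 1 := by exact_mod_cast hs
  -- key iff
  have key : ∀ t, t ≤ N → ∀ i, (p ^ t ∣ c + q * i ↔ p ^ t ∣ u * c + i) := by
    intro t ht i
    have hpt : (p:ℤ) ^ t ∣ (p:ℤ) ^ N := pow_dvd_pow _ ht
    rw [← Int.natCast_dvd_natCast, ← Int.natCast_dvd_natCast]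
    push_cast
    constructor
    · intro h
      have heq : (u:ℤ) * c + i = u * ((c:ℤ) + q * i) - s * (p:ℤ) ^ N * i := by
        linear_combination (-(i:ℤ)) * hsZ
      rw [heq]
      exact dvd_sub (h.mul_left _) ((hpt.mul_left _).mul_right _)
    · intro h
      have heq : (c:ℤ) + q * i = q * ((u:ℤ) * c + i) - s * (p:ℤ) ^ N * c := by
        linear_combination (-(c:ℤ)) * hsZ
      rw [heq]
      exact dvd_sub (h.mul_left _) ((hpt.mul_left _).mul_right _)
  -- valuation equality per term
  have hval : ∀ i ∈ Finset.range m, (c + q * i).factorization p = (u * c + i).factorization p := by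
    intro i hi
    have hi' : i < m := Finset.mem_range.mp hi
    have hx0 : 0 < c + q * i := by omega
    have hy0 : 0 < u * c + i := by positivity
    have hxN : c + q * i < p ^ N := by
      calc c + q * i < N + 1 := by have := Nat.mul_le_mul_left q hi'.le; omega
      _ ≤ 2 ^ N := Nat.add_one_le_iff.mpr Nat.lt_two_pow_self
      _ ≤ p ^ N := Nat.pow_le_pow_left hp.two_le N
    have hvxN : (c + q * i).factorization p < N := by
      by_contra hcon
      push_neg at hcon
      have : p ^ N ∣ c + q * i :=
        (Nat.Prime.pow_dvd_iff_le_factorization hp (by omega)).mpr hcon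
      exact absurd (Nat.le_of_dvd hx0 this) (by omega)
    have hvyN : (u * c + i).factorization p ≤ N := by
      by_contra hcon
      push_neg at hcon
      have hdy : p ^ N ∣ u * c + i :=
        (Nat.Prime.pow_dvd_iff_le_factorization hp (by omega)).mpr (le_of_lt hcon)
      have : p ^ N ∣ c + q * i := (key N le_rfl i).mpr hdy
      exact absurd (Nat.le_of_dvd hx0 this) (by omega)
    apply le_antisymm
    · exact (Nat.Prime.pow_dvd_iff_le_factorization hp (by omega)).mp
        ((key _ hvxN.le i).mp (Nat.ordProj_dvd _ _))
    · exact (Nat.Prime.pow_dvd_iff_le_factorization hp (by omega)).mp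
        ((key _ hvyN i).mpr (Nat.ordProj_dvd _ _))
  have hne1 : ∀ i ∈ Finset.range m, c + q * i ≠ 0 := fun i _ => by omega
  have hne2 : ∀ i ∈ Finset.range m, u * c + i ≠ 0 := fun i _ => by positivity
  have hprod : (∏ i ∈ Finset.range m, (c + q * i)).factorization p
      = (∏ i ∈ Finset.range m, (u * c + i)).factorization p := by
    rw [Nat.factorization_prod hne1, Nat.factorization_prod hne2]
    rw [Finset.sum_apply', Finset.sum_apply']
    exact Finset.sum_congr rfl hval
  rw [hprod]
  have hdvd : m ! ∣ ∏ i ∈ Finset.range m, (u * c + i) := by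
    rw [prod_range_eq_ascFactorial]
    exact Nat.factorial_dvd_ascFactorial _ _
  have hne : (∏ i ∈ Finset.range m, (u * c + i)) ≠ 0 :=
    Finset.prod_ne_zero_iff.mpr hne2
  exact (Nat.factorization_le_iff_dvd (Nat.factorial_ne_zero m) hne).mpr hdvd p

lemma factorial_dvd_E_mul_AP (q n c : ℕ) (hq : 0 < q) (hc : 0 < c) :
    (q * n)! ∣ (∏ p ∈ q.primeFactors, p ^ (q * n / (p - 1))) *
      ∏ i ∈ Finset.range (q * n), (c + q * i) := by
  set m := q * n with hm
  have hEne : (∏ p ∈ q.primeFactors, p ^ (m / (p - 1))) ≠ 0 := by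
    apply Finset.prod_ne_zero_iff.mpr
    intro p hp
    exact pow_ne_zero _ (Nat.Prime.ne_zero (Nat.prime_of_mem_primeFactors hp))
  have hAne : (∏ i ∈ Finset.range m, (c + q * i)) ≠ 0 :=
    Finset.prod_ne_zero_iff.mpr (fun i _ => by omega)
  apply (Nat.factorization_le_iff_dvd (Nat.factorial_ne_zero m) (mul_ne_zero hEne hAne)).mp
  intro p
  rw [Nat.factorization_mul hEne hAne]
  simp only [Finsupp.coe_add, Pi.add_apply]
  by_cases hp : p.Prime
  · by_cases hpq : p ∣ q
    · -- v_p(m!) ≤ m/(p-1) = v_p(E)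
      have hmem : p ∈ q.primeFactors := Nat.mem_primeFactors.mpr ⟨hp, hpq, by omega⟩
      have hE : (∏ p' ∈ q.primeFactors, p' ^ (m / (p' - 1))).factorization p
          = m / (p - 1) := by
        rw [Nat.factorization_prod (fun p' hp' => pow_ne_zero _
          (Nat.Prime.ne_zero (Nat.prime_of_mem_primeFactors hp')))]
        rw [Finset.sum_apply']
        rw [Finset.sum_eq_single_of_mem p hmem]
        · rw [Nat.Prime.factorization_pow hp, Finsupp.single_apply]
          simp
        · intro p' hp' hne
          rw [Nat.Prime.factorization_pow (Nat.prime_of_mem_primeFactors hp'),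
            Finsupp.single_apply]
          simp [hne]
      have hfac : (m !).factorization p ≤ m / (p - 1) := by
        haveI := Fact.mk hp
        rw [Nat.factorization_def _ hp]
        have hleg := sub_one_mul_padicValNat_factorial (p := p) m
        have hp1 : 0 < p - 1 := by have := hp.two_le; omega
        rw [Nat.le_div_iff_mul_le hp1, mul_comm]
        exact hleg ▸ Nat.sub_le m _
      calc (m !).factorization p ≤ m / (p - 1) := hfac
        _ ≤ _ := by rw [hE]; exact Nat.le_add_right _ _
    · calc (m !).factorization p
          ≤ (∏ i ∈ Finset.range m, (c + q * i)).factorization p :=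
            fact_le_AP p q c m hp hpq hc
        _ ≤ _ := Nat.le_add_left _ _
  · simp [Nat.factorization_eq_zero_of_not_prime _ hp]

lemma pochB_eq (q n r j : ℕ) (hq : 0 < q) (hj : j ≤ q * r * n) :
    poch (-(j : ℝ) / q + (r : ℝ) * n + 1) (q * n) =
      ((∏ i ∈ Finset.range (q * n), (q * r * n + q - j + q * i) : ℕ) : ℝ) / (q : ℝ) ^ (q * n) := by
  have hq0 : (q : ℝ) ≠ 0 := Nat.cast_ne_zero.mpr (by omega)
  rw [eq_div_iff (pow_ne_zero _ hq0)]
  unfold poch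
  rw [← Finset.card_range (q * n), ← Finset.prod_const, Finset.card_range,
    ← Finset.prod_mul_distrib]
  push_cast
  apply Finset.prod_congr rfl
  intro i _
  have hcast : ((q * r * n + q - j : ℕ) : ℝ)
      = (q : ℝ) * r * n + q - j := by
    have h : j ≤ q * r * n + q := le_trans hj (Nat.le_add_right _ _)
    rw [Nat.cast_sub h]
    push_cast
    ring
  rw [hcast]
  field_simp
  ring

lemma pochA_eq (q n j : ℕ) (hq : 0 < q) :
    poch (-(j : ℝ) / q - (q : ℝ) * n) (q * n) =
      (-1 : ℝ) ^ (q * n) * ((∏ i ∈ Finset.range (q * n), (j + q + q * i) : ℕ) : ℝ) /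
        (q : ℝ) ^ (q * n) := by
  have hq0 : (q : ℝ) ≠ 0 := Nat.cast_ne_zero.mpr (by omega)
  rw [eq_div_iff (pow_ne_zero _ hq0)]
  unfold poch
  rw [← Finset.card_range (q * n), ← Finset.prod_const, Finset.card_range,
    ← Finset.prod_mul_distrib]
  have hrefl := Finset.prod_range_reflect (fun i => ((j + q + q * i : ℕ) : ℝ)) (q * n)
  push_cast at hrefl ⊢
  rw [← hrefl]
  rw [show ((-1 : ℝ)) ^ (q * n) * ∏ i ∈ Finset.range (q * n),
        ((j : ℝ) + q + q * (q * n - 1 - i : ℕ)) =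
      ∏ i ∈ Finset.range (q * n), (-1 * ((j : ℝ) + q + q * (q * n - 1 - i : ℕ))) by
    rw [Finset.prod_mul_distrib, Finset.prod_const, Finset.card_range]]
  apply Finset.prod_congr rfl
  intro i hi
  have hi' : i < q * n := Finset.mem_range.mp hi
  have hcast : ((q * n - 1 - i : ℕ) : ℝ) = (q : ℝ) * n - 1 - i := by
    have h1 : i ≤ q * n - 1 := by omega
    have h2 : 1 ≤ q * n := by omega
    push_cast [Nat.cast_sub h1, Nat.cast_sub h2]
    ring
  rw [hcast]
  field_simp
  ring

theorem stmt_5 (k q r n : ℕ) (hk : 2 ≤ k) (hq : 3 ≤ q) (hr : 2 * k < r)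
    (hn : 0 < n) (hfac : Nat.factorial q ∣ n) :
    ∀ j : ℕ, j ≤ r * q * n → ∃ z : ℤ, Cnj k q r n j = (z : ℝ) := by
  intro j hj
  have hq0 : 0 < q := by omega
  have hjq : j ≤ q * r * n := by rw [show q * r * n = r * q * n by ring]; exact hj
  set A := ∏ i ∈ Finset.range (q * n), (j + q + q * i) with hA
  set B := ∏ i ∈ Finset.range (q * n), (q * r * n + q - j + q * i) with hB
  set E := ∏ p ∈ q.primeFactors, p ^ (q * n / (p - 1)) with hE
  have h1 : (q * n)! ∣ E * A := factorial_dvd_E_mul_AP q n (j + q) hq0 (by omega)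
  have h2 : (q * n)! ∣ E * B := factorial_dvd_E_mul_AP q n (q * r * n + q - j) hq0 (by omega)
  have hdvd : ((q * n)!) ^ (2 * k) ∣ (E * A) ^ k * (E * B) ^ k := by
    rw [show 2 * k = k + k by ring, pow_add]
    exact mul_dvd_mul (pow_dvd_pow_of_dvd h1 k) (pow_dvd_pow_of_dvd h2 k)
  set N0 := ((E * A) ^ k * (E * B) ^ k) / ((q * n)!) ^ (2 * k) with hN0def
  have hN0 : ((q * n)!) ^ (2 * k) * N0 = (E * A) ^ k * (E * B) ^ k :=
    Nat.mul_div_cancel' hdvd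
  have hN0R : (((q * n)! : ℝ)) ^ (2 * k) * (N0 : ℝ)
      = ((E : ℝ) * A) ^ k * ((E : ℝ) * B) ^ k := by
    exact_mod_cast congrArg (fun t : ℕ => (t : ℝ)) hN0
  -- the real prime-power product equals (E : ℝ) ^ (2 * k)
  have hPnat : ∏ p ∈ q.primeFactors, p ^ (2 * k * q * n / (p - 1)) = E ^ (2 * k) := by
    rw [hE, ← Finset.prod_pow]
    apply Finset.prod_congr rfl
    intro p hp
    have hpp : p.Prime := Nat.prime_of_mem_primeFactors hp
    have hpq : p ∣ q := Nat.dvd_of_mem_primeFactors hp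
    have hple : p ≤ q := Nat.le_of_dvd hq0 hpq
    have hp1 : 0 < p - 1 := by have := hpp.two_le; omega
    have hd : (p - 1) ∣ n :=
      dvd_trans (Nat.dvd_factorial hp1 (by omega)) hfac
    obtain ⟨w, hw⟩ := hd
    have e1 : 2 * k * q * n / (p - 1) = 2 * k * q * w := by
      rw [hw, show 2 * k * q * ((p - 1) * w) = (p - 1) * (2 * k * q * w) by ring,
        Nat.mul_div_cancel_left _ hp1]
    have e2 : q * n / (p - 1) = q * w := by
      rw [hw, show q * ((p - 1) * w) = (p - 1) * (q * w) by ring,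
        Nat.mul_div_cancel_left _ hp1]
    rw [e1, e2, ← pow_mul]
    ring_nf
  have hP : (∏ p ∈ q.primeFactors, (p : ℝ) ^ (2 * k * q * n / (p - 1)))
      = ((E : ℝ)) ^ (2 * k) := by
    have := congrArg (fun t : ℕ => (t : ℝ)) hPnat
    push_cast at this
    exact this
  refine ⟨(-1) ^ (j + q * n * k) * (Nat.choose (r * q * n) j : ℤ) *
    ((r * q * n : ℤ) - 2 * j) ^ (1 - k % 2) * (N0 : ℤ), ?_⟩
  have hqR : (q : ℝ) ≠ 0 := Nat.cast_ne_zero.mpr (by omega)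
  have hfR : (((q * n)! : ℝ)) ≠ 0 := Nat.cast_ne_zero.mpr (Nat.factorial_ne_zero _)
  unfold Cnj
  rw [pochA_eq q n j hq0, pochB_eq q n r j hq0 hjq, hP, ← hA, ← hB]
  push_cast [-Nat.cast_prod]
  rw [div_pow, div_pow, ← pow_mul, show 2 * k * q * n = q * n * k + q * n * k by ring, pow_add]
  field_simp
  linear_combination (-1 : ℝ) * (-(1 : ℝ)) ^ (j + q * n * k) * (Nat.choose (r * q * n) j : ℝ) *
    ((r : ℝ) * q * n - 2 * j) ^ (1 - k % 2) * hN0R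
end

section
/- Let k ≥ 2 and q ≥ 3 be integers. Then for any divisor q' ≥ 2 of q, one has V_k⁻(q') ⊆ V_k⁻(q), V_k⁺(q') ⊆ V_k⁺(q), and V_k(q') ⊆ V_k(q). -/
open Finset

/-- The Hurwitz zeta value `ζ(k, x) = ∑_{m ≥ 0} 1/(m+x)^k`. -/
noncomputable def hzeta (k : ℕ) (x : ℝ) : ℝ := ∑' m : ℕ, 1 / ((m : ℝ) + x) ^ k

lemma summable_hz (k : ℕ) (hk : 2 ≤ k) {x : ℝ} (hx : 0 < x) :
    Summable (fun m : ℕ => 1 / ((m : ℝ) + x) ^ k) := by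
  rw [← summable_nat_add_iff 1]
  have hbase : Summable (fun n : ℕ => 1 / (n : ℝ) ^ k) := Real.summable_one_div_nat_pow.mpr hk
  have hbase' : Summable (fun n : ℕ => 1 / ((n : ℝ) + 1) ^ k) := by
    have := (summable_nat_add_iff (f := fun n : ℕ => 1 / (n : ℝ) ^ k) 1).mpr hbase
    push_cast at this
    exact this
  apply Summable.of_nonneg_of_le (fun n => by positivity) (fun n => ?_) hbase'
  apply one_div_le_one_div_of_le (by positivity)
  apply pow_le_pow_left₀ (by positivity)
  push_cast; linarith

lemma hzeta_dist (k : ℕ) (hk : 2 ≤ k) {x : ℝ} (hx : 0 < x) (p : ℕ) (hp : 0 < p) :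
    (p : ℝ) ^ k * hzeta k x = ∑ j ∈ range p, hzeta k ((x + j) / p) := by
  haveI : NeZero p := ⟨hp.ne'⟩
  set f : ℕ → ℝ := fun m => 1 / ((m : ℝ) + x) ^ k with hf
  have hsum : Summable f := summable_hz k hk hx
  have hp' : (0 : ℝ) < p := by exact_mod_cast hp
  have hinj : ∀ j : ℕ, Function.Injective (fun m : ℕ => m * p + j) := by
    intro j m1 m2 h
    simp only [add_left_inj] at h
    exact Nat.eq_of_mul_eq_mul_right hp h
  have key : ∀ j : ℕ, hzeta k ((x + j) / p) = (p : ℝ) ^ k * ∑' m : ℕ, f (m * p + j) := by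
    intro j
    unfold hzeta
    rw [← tsum_mul_left]
    congr 1; funext m
    have harg : (m : ℝ) + (x + j) / p = (((m * p + j : ℕ) : ℝ) + x) / p := by
      push_cast; field_simp; ring
    rw [harg, div_pow, one_div, inv_div, div_eq_mul_one_div]
  let e : ℕ × Fin p ≃ ℕ := (Nat.divModEquiv p).symm
  have he : ∀ y : ℕ × Fin p, e y = y.1 * p + (y.2 : ℕ) := by
    intro y; rfl
  have hsum2 : Summable (fun y : ℕ × Fin p => f (y.1 * p + (y.2 : ℕ))) := by
    have h2 := hsum.comp_injective e.injective
    have : (f ∘ ⇑e) = fun y : ℕ × Fin p => f (y.1 * p + (y.2 : ℕ)) := by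
      funext y; simp [Function.comp, he y]
    rwa [this] at h2
  have htot : ∑' n, f n = ∑' y : ℕ × Fin p, f (y.1 * p + (y.2 : ℕ)) := by
    rw [← Equiv.tsum_eq e f]
    exact tsum_congr fun y => by rw [he y]
  have hprod : ∑' y : ℕ × Fin p, f (y.1 * p + (y.2 : ℕ))
      = ∑' m : ℕ, ∑' j : Fin p, f (m * p + (j : ℕ)) :=
    Summable.tsum_prod' hsum2 (fun b => hsum2.prod_factor b)
  have hswap : ∑' m : ℕ, ∑' j : Fin p, f (m * p + (j : ℕ))
      = ∑ j : Fin p, ∑' m : ℕ, f (m * p + (j : ℕ)) := by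
    have h1 : ∀ m : ℕ, ∑' j : Fin p, f (m * p + (j : ℕ)) = ∑ j : Fin p, f (m * p + (j : ℕ)) :=
      fun m => tsum_fintype _
    calc ∑' m : ℕ, ∑' j : Fin p, f (m * p + (j : ℕ))
        = ∑' m : ℕ, ∑ j : Fin p, f (m * p + (j : ℕ)) := by simp_rw [h1]
      _ = ∑ j : Fin p, ∑' m : ℕ, f (m * p + (j : ℕ)) :=
          Summable.tsum_finsetSum (fun j _ => hsum.comp_injective (hinj j))
  calc (p : ℝ) ^ k * hzeta k x
      = (p:ℝ)^k * ∑' n, f n := rfl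
    _ = (p:ℝ)^k * ∑ j : Fin p, ∑' m : ℕ, f (m * p + (j : ℕ)) := by rw [htot, hprod, hswap]
    _ = ∑ j : Fin p, (p:ℝ)^k * ∑' m : ℕ, f (m * p + (j : ℕ)) := by rw [mul_sum]
    _ = ∑ j : Fin p, hzeta k ((x + ((j : ℕ) : ℝ)) / p) := by
        refine Finset.sum_congr rfl (fun j _ => ?_); rw [key]
    _ = ∑ j ∈ range p, hzeta k ((x + j) / p) :=
        Fin.sum_univ_eq_sum_range (fun j : ℕ => hzeta k ((x + (j : ℝ)) / p)) p
/-- The odd part `ζ⁻(k, a/q) = ζ(k, a/q) − (−1)^k ζ(k, 1 − a/q)`. -/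
noncomputable def zetaMinus (k a q : ℕ) : ℝ :=
  hzeta k ((a : ℝ) / q) - (-1 : ℝ) ^ k * hzeta k (1 - (a : ℝ) / q)

/-- The even part `ζ⁺(k, a/q) = ζ(k, a/q) + (−1)^k ζ(k, 1 − a/q)`. -/
noncomputable def zetaPlus (k a q : ℕ) : ℝ :=
  hzeta k ((a : ℝ) / q) + (-1 : ℝ) ^ k * hzeta k (1 - (a : ℝ) / q)

/-- `V_k⁻(q)` for `q ≥ 3`; for `q = 2` it is defined as `ℚ · ζ⁻(k, 1/2)`. -/
noncomputable def Vminus (k q : ℕ) : Submodule ℚ ℝ :=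
  if q = 2 then Submodule.span ℚ {zetaMinus k 1 2}
  else Submodule.span ℚ
    {x : ℝ | ∃ a : ℕ, 1 ≤ a ∧ 2 * a < q ∧ Nat.gcd a q = 1 ∧ x = zetaMinus k a q}

/-- `V_k⁺(q)` for `q ≥ 3`; for `q = 2` it is defined as `ℚ · ζ⁺(k, 1/2)`. -/
noncomputable def Vplus (k q : ℕ) : Submodule ℚ ℝ :=
  if q = 2 then Submodule.span ℚ {zetaPlus k 1 2}
  else Submodule.span ℚ
    {x : ℝ | ∃ a : ℕ, 1 ≤ a ∧ 2 * a < q ∧ Nat.gcd a q = 1 ∧ x = zetaPlus k a q}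

/-- `V_k(q)`, the ℚ-span of `ζ(k, a/q)` for `1 ≤ a < q` coprime to `q`
(for `q = 2` this gives `ℚ · ζ(k, 1/2)` as well). -/
noncomputable def Vfull (k q : ℕ) : Submodule ℚ ℝ :=
  Submodule.span ℚ
    {x : ℝ | ∃ a : ℕ, 1 ≤ a ∧ a < q ∧ Nat.gcd a q = 1 ∧ x = hzeta k ((a : ℝ) / q)}

/-- generic span of values `F c q` over coprime numerators. -/
noncomputable def Gspan (F : ℕ → ℕ → ℝ) (q : ℕ) : Submodule ℚ ℝ :=
  Submodule.span ℚ {x : ℝ | ∃ c : ℕ, 1 ≤ c ∧ c < q ∧ Nat.gcd c q = 1 ∧ x = F c q}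

lemma mem_Gspan {F : ℕ → ℕ → ℝ} {q c : ℕ} (h1 : 1 ≤ c) (h2 : c < q) (h3 : Nat.gcd c q = 1) :
    F c q ∈ Gspan F q :=
  Submodule.subset_span ⟨c, h1, h2, h3, rfl⟩

lemma cj_lt {p q' a j : ℕ} (ha : a < q') (hj : j < p) : a + j * q' < p * q' := by
  calc a + j * q' < q' + j * q' := Nat.add_lt_add_right ha _
    _ = (j + 1) * q' := by ring
    _ ≤ p * q' := Nat.mul_le_mul_right _ hj

lemma nat_cast_sub_div {a q : ℕ} (h1 : a ≤ q) (h2 : 0 < q) :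
    (1 : ℝ) - (a : ℝ) / q = ((q - a : ℕ) : ℝ) / q := by
  have hq : (q : ℝ) ≠ 0 := by positivity
  rw [Nat.cast_sub h1]
  field_simp

-- H2 for hzeta
lemma H2full (k : ℕ) (hk : 2 ≤ k) (p a q' : ℕ) (hp : 0 < p) (ha1 : 1 ≤ a) (ha2 : a < q') :
    (p : ℝ) ^ k * hzeta k ((a : ℝ) / q') =
      ∑ j ∈ range p, hzeta k (((a + j * q' : ℕ) : ℝ) / ((p * q' : ℕ) : ℝ)) := by
  have hq' : 0 < q' := by omega
  have hx : (0 : ℝ) < (a : ℝ) / q' := by positivity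
  rw [hzeta_dist k hk hx p hp]
  refine Finset.sum_congr rfl (fun j _ => ?_)
  congr 1
  have hq0 : (q' : ℝ) ≠ 0 := by positivity
  have hp0 : (p : ℝ) ≠ 0 := by positivity
  push_cast
  rw [div_add' _ _ _ hq0, div_div]
  ring_nf

-- the reflected ℕ identity
lemma reflect_nat {p q' a j : ℕ} (hj : j < p) (ha1 : 1 ≤ a) (ha2 : a < q') :
    (q' - a) + (p - 1 - j) * q' = p * q' - (a + j * q') := by
  have hm : j + 1 + (p - 1 - j) = p := by omega
  have h2 : p * q' = j * q' + q' + (p - 1 - j) * q' := by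
    calc p * q' = (j + 1 + (p - 1 - j)) * q' := by rw [hm]
      _ = j * q' + q' + (p - 1 - j) * q' := by ring
  rw [h2]
  have key : ∀ X Y : ℕ, a ≤ q' → (q' - a) + Y = (X + q' + Y) - (a + X) := by
    intro X Y h; omega
  exact key (j * q') ((p - 1 - j) * q') (le_of_lt ha2)

lemma H2full_reflect (k : ℕ) (hk : 2 ≤ k) (p a q' : ℕ) (hp : 0 < p) (ha1 : 1 ≤ a) (ha2 : a < q') :
    (p : ℝ) ^ k * hzeta k (((q' - a : ℕ) : ℝ) / q') =
      ∑ j ∈ range p, hzeta k (((p * q' - (a + j * q') : ℕ) : ℝ) / ((p * q' : ℕ) : ℝ)) := by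
  rw [H2full k hk p (q' - a) q' hp (by omega) (by omega)]
  rw [← Finset.sum_range_reflect]
  refine Finset.sum_congr rfl (fun j hj => ?_)
  rw [mem_range] at hj
  congr 3
  exact reflect_nat hj ha1 ha2

lemma H2minus (k : ℕ) (hk : 2 ≤ k) (p a q' : ℕ) (hp : 0 < p) (ha1 : 1 ≤ a) (ha2 : a < q') :
    (p : ℝ) ^ k * zetaMinus k a q' = ∑ j ∈ range p, zetaMinus k (a + j * q') (p * q') := by
  have hq' : 0 < q' := by omega
  have hpq : 0 < p * q' := by positivity
  have harg : (1 : ℝ) - (a : ℝ) / q' = ((q' - a : ℕ) : ℝ) / q' := nat_cast_sub_div (le_of_lt ha2) hq'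
  unfold zetaMinus
  rw [harg]
  have e1 := H2full k hk p a q' hp ha1 ha2
  have e3 := H2full_reflect k hk p a q' hp ha1 ha2
  calc (p:ℝ)^k * (hzeta k ((a:ℝ)/q') - (-1:ℝ)^k * hzeta k (((q'-a:ℕ):ℝ)/q'))
      = (p:ℝ)^k * hzeta k ((a:ℝ)/q')
        - (-1:ℝ)^k * ((p:ℝ)^k * hzeta k (((q'-a:ℕ):ℝ)/q')) := by ring
    _ = ∑ j ∈ range p, hzeta k (((a + j*q' : ℕ):ℝ)/((p*q' : ℕ):ℝ))
        - (-1:ℝ)^k * ∑ j ∈ range p, hzeta k (((p*q' - (a + j*q') : ℕ):ℝ)/((p*q' : ℕ):ℝ)) := by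
          rw [e1, e3]
    _ = ∑ j ∈ range p, (hzeta k (((a + j*q' : ℕ):ℝ)/((p*q' : ℕ):ℝ))
        - (-1:ℝ)^k * hzeta k (((p*q' - (a + j*q') : ℕ):ℝ)/((p*q' : ℕ):ℝ))) := by
          rw [Finset.sum_sub_distrib, Finset.mul_sum]
    _ = ∑ j ∈ range p, (hzeta k (((a + j*q' : ℕ):ℝ)/((p*q' : ℕ):ℝ))
        - (-1:ℝ)^k * hzeta k (1 - ((a + j*q' : ℕ):ℝ)/((p*q' : ℕ):ℝ))) := by
          refine Finset.sum_congr rfl (fun j hj => ?_)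
          rw [mem_range] at hj
          rw [nat_cast_sub_div (le_of_lt (cj_lt ha2 hj)) hpq]
lemma H2plus (k : ℕ) (hk : 2 ≤ k) (p a q' : ℕ) (hp : 0 < p) (ha1 : 1 ≤ a) (ha2 : a < q') :
    (p : ℝ) ^ k * zetaPlus k a q' = ∑ j ∈ range p, zetaPlus k (a + j * q') (p * q') := by
  have hq' : 0 < q' := by omega
  have hpq : 0 < p * q' := by positivity
  have harg : (1 : ℝ) - (a : ℝ) / q' = ((q' - a : ℕ) : ℝ) / q' := nat_cast_sub_div (le_of_lt ha2) hq'
  unfold zetaPlus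
  rw [harg]
  have e1 := H2full k hk p a q' hp ha1 ha2
  have e3 := H2full_reflect k hk p a q' hp ha1 ha2
  calc (p:ℝ)^k * (hzeta k ((a:ℝ)/q') + (-1:ℝ)^k * hzeta k (((q'-a:ℕ):ℝ)/q'))
      = (p:ℝ)^k * hzeta k ((a:ℝ)/q')
        + (-1:ℝ)^k * ((p:ℝ)^k * hzeta k (((q'-a:ℕ):ℝ)/q')) := by ring
    _ = ∑ j ∈ range p, hzeta k (((a + j*q' : ℕ):ℝ)/((p*q' : ℕ):ℝ))
        + (-1:ℝ)^k * ∑ j ∈ range p, hzeta k (((p*q' - (a + j*q') : ℕ):ℝ)/((p*q' : ℕ):ℝ)) := by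
          rw [e1, e3]
    _ = ∑ j ∈ range p, (hzeta k (((a + j*q' : ℕ):ℝ)/((p*q' : ℕ):ℝ))
        + (-1:ℝ)^k * hzeta k (((p*q' - (a + j*q') : ℕ):ℝ)/((p*q' : ℕ):ℝ))) := by
          rw [Finset.sum_add_distrib, Finset.mul_sum]
    _ = ∑ j ∈ range p, (hzeta k (((a + j*q' : ℕ):ℝ)/((p*q' : ℕ):ℝ))
        + (-1:ℝ)^k * hzeta k (1 - ((a + j*q' : ℕ):ℝ)/((p*q' : ℕ):ℝ))) := by
          refine Finset.sum_congr rfl (fun j hj => ?_)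
          rw [mem_range] at hj
          rw [nat_cast_sub_div (le_of_lt (cj_lt ha2 hj)) hpq]

-- H1 (scaling) lemmas
lemma scale_arg {p b q' : ℕ} (hp : 0 < p) (hq' : 0 < q') :
    ((p * b : ℕ) : ℝ) / ((p * q' : ℕ) : ℝ) = (b : ℝ) / (q' : ℝ) := by
  have hp0 : (p : ℝ) ≠ 0 := by positivity
  push_cast
  rw [mul_div_mul_left _ _ hp0]

lemma H1full (k p b q' : ℕ) (hp : 0 < p) (hq' : 0 < q') :
    hzeta k (((p * b : ℕ) : ℝ) / ((p * q' : ℕ) : ℝ)) = hzeta k ((b : ℝ) / q') := by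
  rw [scale_arg hp hq']

lemma H1minus (k p b q' : ℕ) (hp : 0 < p) (hq' : 0 < q') :
    zetaMinus k (p * b) (p * q') = zetaMinus k b q' := by
  unfold zetaMinus
  rw [scale_arg hp hq']

lemma H1plus (k p b q' : ℕ) (hp : 0 < p) (hq' : 0 < q') :
    zetaPlus k (p * b) (p * q') = zetaPlus k b q' := by
  unfold zetaPlus
  rw [scale_arg hp hq']

-- telescoping
lemma tele_id (r : ℝ) (v : ℕ → ℝ) :
    ∀ n : ℕ, ∑ i ∈ range n, r ^ (n - 1 - i) * (r * v i - v (i + 1)) = r ^ n * v 0 - v n := by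
  intro n
  induction n with
  | zero => simp
  | succ n ih =>
    rw [Finset.sum_range_succ]
    have h1 : ∀ i ∈ range n, r ^ (n + 1 - 1 - i) * (r * v i - v (i + 1))
        = r * (r ^ (n - 1 - i) * (r * v i - v (i + 1))) := by
      intro i hi
      rw [mem_range] at hi
      rw [show n + 1 - 1 - i = (n - 1 - i) + 1 by omega, pow_succ]
      ring
    rw [Finset.sum_congr rfl h1, ← Finset.mul_sum, ih,
      show n + 1 - 1 - n = 0 by omega, pow_zero, pow_succ]
    ring

lemma tele_mem (W : Submodule ℚ ℝ) (r : ℚ) (hr : 1 < r) (v : ℕ → ℝ) (n : ℕ) (hn : 0 < n)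
    (hper : v n = v 0) (hrel : ∀ i, (r : ℝ) * v i - v (i + 1) ∈ W) : v 0 ∈ W := by
  have hmem : ((r : ℝ) ^ n * v 0 - v n) ∈ W := by
    rw [← tele_id]
    refine Submodule.sum_mem _ (fun i _ => ?_)
    have h2 := Submodule.smul_mem W (r ^ (n - 1 - i)) (hrel i)
    rw [Rat.smul_def] at h2
    push_cast at h2
    exact h2
  have hrn : (1 : ℚ) < r ^ n := one_lt_pow₀ hr hn.ne'
  have hne : ((r ^ n - 1 : ℚ) : ℝ) ≠ 0 := by
    have : (r ^ n - 1 : ℚ) ≠ 0 := sub_ne_zero.mpr (ne_of_gt hrn)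
    exact_mod_cast this
  have hne' : ((r : ℝ) ^ n - 1) ≠ 0 := by push_cast at hne; exact hne
  have hv : v 0 = ((r ^ n - 1 : ℚ))⁻¹ • ((r : ℝ) ^ n * v 0 - v n) := by
    rw [hper, Rat.smul_def]
    push_cast
    field_simp
  rw [hv]
  exact Submodule.smul_mem _ _ hmem
lemma coprime_c {a j q' p : ℕ} (hg : Nat.gcd a q' = 1) (hnd : ¬ p ∣ (a + j * q'))
    (hp : p.Prime) : Nat.gcd (a + j * q') (p * q') = 1 := by
  have h1 : Nat.Coprime (a + j * q') q' := (Nat.coprime_add_mul_right_left a q' j).mpr hg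
  have h2 : Nat.Coprime (a + j * q') p :=
    Nat.coprime_comm.mp ((Nat.Prime.coprime_iff_not_dvd hp).mpr hnd)
  exact Nat.Coprime.mul_right h2 h1

lemma step_lemma (k : ℕ) (hk : 2 ≤ k) (F : ℕ → ℕ → ℝ)
    (H1 : ∀ p b q' : ℕ, 0 < p → 0 < q' → F (p * b) (p * q') = F b q')
    (H2 : ∀ p a q' : ℕ, 0 < p → 1 ≤ a → a < q' →
      (p : ℝ) ^ k * F a q' = ∑ j ∈ range p, F (a + j * q') (p * q'))
    (p q' : ℕ) (hp : p.Prime) (hq' : 2 ≤ q')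
    (a : ℕ) (ha1 : 1 ≤ a) (ha2 : a < q') (hg : Nat.gcd a q' = 1) :
    F a q' ∈ Gspan F (p * q') := by
  haveI : NeZero q' := ⟨by omega⟩
  haveI : Fact (1 < q') := ⟨by omega⟩
  have hp0 : 0 < p := hp.pos
  have hq'0 : 0 < q' := by omega
  by_cases hdvd : p ∣ q'
  · -- all shifted numerators are coprime to p * q'
    have hnd : ∀ j, ¬ p ∣ (a + j * q') := by
      intro j hpd
      have h1 : p ∣ j * q' := Dvd.dvd.mul_left hdvd j
      have h2 : p ∣ a := (Nat.dvd_add_right h1).mp (by rwa [add_comm] at hpd)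
      have := Nat.dvd_gcd h2 hdvd
      rw [hg] at this
      exact Nat.Prime.one_lt hp |>.ne' (Nat.le_antisymm (Nat.le_of_dvd one_pos this) (by omega)) 
    have key := H2 p a q' hp0 ha1 ha2
    have heq : F a q' = ((p : ℚ) ^ k)⁻¹ • ∑ j ∈ range p, F (a + j * q') (p * q') := by
      rw [Rat.smul_def, ← key]
      push_cast
      rw [inv_mul_cancel_left₀ (by positivity : ((p : ℝ)) ^ k ≠ 0)]
    rw [heq]
    refine Submodule.smul_mem _ _ (Submodule.sum_mem _ (fun j hj => ?_))
    rw [mem_range] at hj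
    exact mem_Gspan (by omega) (cj_lt ha2 hj) (coprime_c hg (hnd j) hp)
  · -- telescoping case
    have hcp : Nat.Coprime p q' := (Nat.Prime.coprime_iff_not_dvd hp).mpr hdvd
    haveI : Fact p.Prime := ⟨hp⟩
    set u : (ZMod q')ˣ := ZMod.unitOfCoprime p hcp with hu
    set g0 : (ZMod q')ˣ := ZMod.unitOfCoprime a hg with hg0
    set A : ℕ → ℕ := fun i => ZMod.val ((u⁻¹ ^ i * g0 : (ZMod q')ˣ) : ZMod q') with hA
    have hAlt : ∀ i, A i < q' := fun i => ZMod.val_lt _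
    have hA1 : ∀ i, 1 ≤ A i := by
      intro i
      rcases Nat.eq_zero_or_pos (A i) with h | h
      · exfalso
        have : ((u⁻¹ ^ i * g0 : (ZMod q')ˣ) : ZMod q') = 0 := (ZMod.val_eq_zero _).mp h
        exact Units.ne_zero _ this
      · exact h
    have hAcop : ∀ i, Nat.gcd (A i) q' = 1 := fun i => ZMod.val_coe_unit_coprime _
    -- one step of the recursion
    have hstep : ∀ i : ℕ, ((p : ℚ) ^ k : ℝ) * F (A i) q' - F (A (i + 1)) q' ∈ Gspan F (p * q') := by
      intro i
      have hbmod : (p : ZMod q') * ((A (i+1) : ℕ) : ZMod q') = ((A i : ℕ) : ZMod q') := by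
        rw [hA]
        rw [ZMod.natCast_zmod_val, ZMod.natCast_zmod_val]
        have h1 : (p : ZMod q') = (u : ZMod q') := (ZMod.coe_unitOfCoprime p hcp).symm
        rw [h1, ← Units.val_mul]
        congr 1
        rw [pow_succ', ← mul_assoc, ← mul_assoc, mul_inv_cancel, one_mul]
      have hmod : (p * A (i+1)) % q' = A i := by
        have : ((p * A (i+1) : ℕ) : ZMod q') = ((A i : ℕ) : ZMod q') := by
          push_cast
          exact hbmod
        have h2 := (ZMod.natCast_eq_natCast_iff' _ _ _).mp this
        rwa [Nat.mod_eq_of_lt (hAlt i)] at h2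
      set a' := A i with ha'
      set b := A (i + 1) with hb
      set j₀ := (p * b) / q' with hj₀
      have h1 : q' * j₀ + a' = p * b := by
        conv_rhs => rw [← Nat.div_add_mod (p * b) q']
        rw [hmod]
      have hpb_lt : p * b < p * q' := by
        have := hAlt (i+1)
        nlinarith [hAlt (i+1), hp0]
      have hj0lt : j₀ < p := by
        have h2 : q' * j₀ < q' * p := by
          have h3 : q' * j₀ < p * b := by
            have := hA1 i
            omega
        
          calc q' * j₀ < p * b := h3
            _ < p * q' := hpb_lt
            _ = q' * p := Nat.mul_comm p q'
        exact Nat.lt_of_mul_lt_mul_left h2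
      have hj0mem : j₀ ∈ range p := mem_range.mpr hj0lt
      have hj0id : a' + j₀ * q' = p * b := by
        rw [Nat.mul_comm j₀ q', Nat.add_comm]
        exact h1
      -- coprimality for j ≠ j₀
      have hnd : ∀ j, j < p → j ≠ j₀ → ¬ p ∣ (a' + j * q') := by
        intro j hj hjne hpd
        have e1 : ((a' + j * q' : ℕ) : ZMod p) = 0 := (ZMod.natCast_eq_zero_iff _ _).mpr hpd
        have e2 : ((a' + j₀ * q' : ℕ) : ZMod p) = 0 := by
          rw [hj0id]
          push_cast
          simp
        push_cast at e1 e2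
        have e3 : (j : ZMod p) * (q' : ZMod p) = (j₀ : ZMod p) * (q' : ZMod p) := by
          linear_combination e1 - e2
        have hq'ne : (q' : ZMod p) ≠ 0 := by
          intro h
          exact hdvd ((ZMod.natCast_eq_zero_iff _ _).mp h)
        have e4 : (j : ZMod p) = (j₀ : ZMod p) := mul_right_cancel₀ hq'ne e3
        have e5 := (ZMod.natCast_eq_natCast_iff' _ _ _).mp e4
        rw [Nat.mod_eq_of_lt hj, Nat.mod_eq_of_lt hj0lt] at e5
        exact hjne e5
      have key := H2 p a' q' hp0 (hA1 i) (hAlt i)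
      have hsplit : ∑ j ∈ range p, F (a' + j * q') (p * q')
          = F (a' + j₀ * q') (p * q') + ∑ j ∈ (range p).erase j₀, F (a' + j * q') (p * q') :=
        (Finset.add_sum_erase _ _ hj0mem).symm
      have hrec : F (a' + j₀ * q') (p * q') = F b q' := by
        rw [hj0id]
        exact H1 p b q' hp0 hq'0
      have hfinal : ((p : ℚ) ^ k : ℝ) * F a' q' - F b q'
          = ∑ j ∈ (range p).erase j₀, F (a' + j * q') (p * q') := by
        push_cast
        rw [key, hsplit, hrec]
        ring
      rw [hfinal]
      refine Submodule.sum_mem _ (fun j hj => ?_)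
      have hjne := Finset.ne_of_mem_erase hj
      have hjlt := mem_range.mp (Finset.mem_of_mem_erase hj)
      have := hA1 i
      exact mem_Gspan (by omega) (cj_lt (hAlt i) hjlt)
        (coprime_c (hAcop i) (hnd j hjlt hjne) hp)
    -- periodicity
    have hn : 0 < q'.totient := Nat.totient_pos.mpr hq'0
    have hper : A q'.totient = A 0 := by
      rw [hA]
      have h1 : u⁻¹ ^ q'.totient = 1 := ZMod.pow_totient u⁻¹
      simp [h1]
    have hr1 : (1 : ℚ) < (p : ℚ) ^ k := by
      have : (1 : ℚ) < (p : ℚ) := by exact_mod_cast hp.one_lt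
      exact one_lt_pow₀ this (by omega)
    have h0 := tele_mem (Gspan F (p * q')) ((p : ℚ) ^ k) hr1 (fun i => F (A i) q')
      q'.totient hn (by show F (A q'.totient) q' = F (A 0) q'; rw [hper]) (fun i => by
        have := hstep i
        push_cast at this ⊢
        exact this)
    have hA0 : A 0 = a := by
      show ZMod.val ((u⁻¹ ^ 0 * g0 : (ZMod q')ˣ) : ZMod q') = a
      rw [pow_zero, one_mul, hg0, ZMod.coe_unitOfCoprime, ZMod.val_cast_of_lt ha2]
    simpa [hA0] using h0
lemma generic_lemma (k : ℕ) (hk : 2 ≤ k) (F : ℕ → ℕ → ℝ)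
    (H1 : ∀ p b q' : ℕ, 0 < p → 0 < q' → F (p * b) (p * q') = F b q')
    (H2 : ∀ p a q' : ℕ, 0 < p → 1 ≤ a → a < q' →
      (p : ℝ) ^ k * F a q' = ∑ j ∈ range p, F (a + j * q') (p * q')) :
    ∀ d : ℕ, 0 < d → ∀ q' : ℕ, 2 ≤ q' → ∀ a : ℕ, 1 ≤ a → a < q' → Nat.gcd a q' = 1 →
      F a q' ∈ Gspan F (d * q') := by
  intro d
  induction d using Nat.strong_induction_on with
  | _ d ih =>
    intro hd q' hq' a ha1 ha2 hg
    rcases eq_or_ne d 1 with rfl | hne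
    · rw [one_mul]
      exact mem_Gspan ha1 ha2 hg
    · obtain ⟨pp, hpp, e, rfl⟩ : ∃ pp, pp.Prime ∧ ∃ e, d = pp * e := by
        obtain ⟨pp, hpp, hpd⟩ := Nat.exists_prime_and_dvd hne
        exact ⟨pp, hpp, hpd⟩
      have he : 0 < e := by
        rcases Nat.eq_zero_or_pos e with rfl | h
        · simp at hd
        · exact h
      have hstep : F a q' ∈ Gspan F (pp * q') :=
        step_lemma k hk F H1 H2 pp q' hpp hq' a ha1 ha2 hg
      have hlt : e < pp * e := by
        have := hpp.two_le
        nlinarith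
      have hle : Gspan F (pp * q') ≤ Gspan F (e * (pp * q')) := by
        rw [Gspan, Submodule.span_le]
        rintro x ⟨c, hc1, hc2, hc3, rfl⟩
        exact ih e hlt he (pp * q') (by nlinarith [hpp.two_le]) c hc1 hc2 hc3
      have := hle hstep
      rwa [show e * (pp * q') = (pp * e) * q' by ring] at this

lemma neg_pow_sq (kk : ℕ) : (-1 : ℝ) ^ kk * (-1 : ℝ) ^ kk = 1 := by
  rw [← mul_pow]
  norm_num

lemma zetaMinus_mem (k q a : ℕ) (hq : 2 ≤ q) (ha1 : 1 ≤ a) (ha2 : a < q)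
    (hg : Nat.gcd a q = 1) : zetaMinus k a q ∈ Vminus k q := by
  by_cases h2 : q = 2
  · subst h2
    have : a = 1 := by omega
    subst this
    rw [Vminus, if_pos rfl]
    exact Submodule.mem_span_singleton_self _
  · rw [Vminus, if_neg h2]
    rcases lt_trichotomy (2 * a) q with h | h | h
    · exact Submodule.subset_span ⟨a, ha1, h, hg, rfl⟩
    · exfalso
      have hdvd : a ∣ q := ⟨2, by omega⟩
      have := Nat.dvd_gcd (dvd_refl a) hdvd
      rw [hg] at this
      have : a = 1 := Nat.le_antisymm (Nat.le_of_dvd one_pos this) ha1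
      omega
    · have hle : a ≤ q := le_of_lt ha2
      have hg' : Nat.gcd (q - a) q = 1 := (Nat.coprime_self_sub_left hle).mpr hg
      have hmem : zetaMinus k (q - a) q ∈ Submodule.span ℚ
          {x : ℝ | ∃ b : ℕ, 1 ≤ b ∧ 2 * b < q ∧ Nat.gcd b q = 1 ∧ x = zetaMinus k b q} :=
        Submodule.subset_span ⟨q - a, by omega, by omega, hg', rfl⟩
      have hq0 : 0 < q := by omega
      have h1 : ((q - a : ℕ) : ℝ) / q = 1 - (a : ℝ) / q := (nat_cast_sub_div hle hq0).symm
      have h2' : (1 : ℝ) - ((q - a : ℕ) : ℝ) / q = (a : ℝ) / q := by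
        rw [h1]; ring
      have hid : zetaMinus k a q = (-(-1 : ℚ) ^ k) • zetaMinus k (q - a) q := by
        rw [Rat.smul_def]
        push_cast
        unfold zetaMinus
        rw [h1, show (1 : ℝ) - (1 - (a : ℝ) / q) = (a : ℝ) / q by ring]
        have h4 := neg_pow_sq k
        linear_combination (-(hzeta k ((a : ℝ) / q))) * h4
      rw [hid]
      exact Submodule.smul_mem _ _ hmem

lemma zetaPlus_mem (k q a : ℕ) (hq : 2 ≤ q) (ha1 : 1 ≤ a) (ha2 : a < q)
    (hg : Nat.gcd a q = 1) : zetaPlus k a q ∈ Vplus k q := by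
  by_cases h2 : q = 2
  · subst h2
    have : a = 1 := by omega
    subst this
    rw [Vplus, if_pos rfl]
    exact Submodule.mem_span_singleton_self _
  · rw [Vplus, if_neg h2]
    rcases lt_trichotomy (2 * a) q with h | h | h
    · exact Submodule.subset_span ⟨a, ha1, h, hg, rfl⟩
    · exfalso
      have hdvd : a ∣ q := ⟨2, by omega⟩
      have := Nat.dvd_gcd (dvd_refl a) hdvd
      rw [hg] at this
      have : a = 1 := Nat.le_antisymm (Nat.le_of_dvd one_pos this) ha1
      omega
    · have hle : a ≤ q := le_of_lt ha2
      have hg' : Nat.gcd (q - a) q = 1 := (Nat.coprime_self_sub_left hle).mpr hg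
      have hmem : zetaPlus k (q - a) q ∈ Submodule.span ℚ
          {x : ℝ | ∃ b : ℕ, 1 ≤ b ∧ 2 * b < q ∧ Nat.gcd b q = 1 ∧ x = zetaPlus k b q} :=
        Submodule.subset_span ⟨q - a, by omega, by omega, hg', rfl⟩
      have hq0 : 0 < q := by omega
      have h1 : ((q - a : ℕ) : ℝ) / q = 1 - (a : ℝ) / q := (nat_cast_sub_div hle hq0).symm
      have h2' : (1 : ℝ) - ((q - a : ℕ) : ℝ) / q = (a : ℝ) / q := by
        rw [h1]; ring
      have hid : zetaPlus k a q = ((-1 : ℚ) ^ k) • zetaPlus k (q - a) q := by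
        rw [Rat.smul_def]
        push_cast
        unfold zetaPlus
        rw [h1, show (1 : ℝ) - (1 - (a : ℝ) / q) = (a : ℝ) / q by ring]
        have h4 := neg_pow_sq k
        linear_combination (-(hzeta k ((a : ℝ) / q))) * h4
      rw [hid]
      exact Submodule.smul_mem _ _ hmem

lemma Vminus_le_of (k q : ℕ) (hq : 2 ≤ q) (W : Submodule ℚ ℝ)
    (h : ∀ a, 1 ≤ a → a < q → Nat.gcd a q = 1 → zetaMinus k a q ∈ W) : Vminus k q ≤ W := by
  rw [Vminus]
  split_ifs with h2
  · subst h2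
    rw [Submodule.span_le]
    rintro x hx
    rw [Set.mem_singleton_iff] at hx
    subst hx
    exact h 1 le_rfl (by norm_num) (by norm_num)
  · rw [Submodule.span_le]
    rintro x ⟨a, h1, h2', h3, rfl⟩
    exact h a h1 (by omega) h3

lemma Vplus_le_of (k q : ℕ) (hq : 2 ≤ q) (W : Submodule ℚ ℝ)
    (h : ∀ a, 1 ≤ a → a < q → Nat.gcd a q = 1 → zetaPlus k a q ∈ W) : Vplus k q ≤ W := by
  rw [Vplus]
  split_ifs with h2
  · subst h2
    rw [Submodule.span_le]
    rintro x hx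
    rw [Set.mem_singleton_iff] at hx
    subst hx
    exact h 1 le_rfl (by norm_num) (by norm_num)
  · rw [Submodule.span_le]
    rintro x ⟨a, h1, h2', h3, rfl⟩
    exact h a h1 (by omega) h3

theorem stmt_8 (k q : ℕ) (hk : 2 ≤ k) (hq : 3 ≤ q) :
    ∀ q' : ℕ, 2 ≤ q' → q' ∣ q →
      Vminus k q' ≤ Vminus k q ∧ Vplus k q' ≤ Vplus k q ∧ Vfull k q' ≤ Vfull k q := by
  intro q' hq'2 hdvd
  obtain ⟨d, rfl⟩ := hdvd
  have hd : 0 < d := by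
    rcases Nat.eq_zero_or_pos d with rfl | h
    · simp at hq
    · exact h
  have hq2 : 2 ≤ q' * d := by nlinarith
  refine ⟨?_, ?_, ?_⟩
  · apply Vminus_le_of k q' hq'2
    intro a h1 h2 h3
    have hmem : zetaMinus k a q' ∈ Gspan (fun a q => zetaMinus k a q) (d * q') :=
      generic_lemma k hk _ (fun p b q'' hp hq'' => H1minus k p b q'' hp hq'')
        (fun p a' q'' hp h1' h2' => H2minus k hk p a' q'' hp h1' h2') d hd q' hq'2 a h1 h2 h3
    have hconv : Gspan (fun a q => zetaMinus k a q) (d * q') ≤ Vminus k (d * q') := by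
      rw [Gspan, Submodule.span_le]
      rintro x ⟨c, hc1, hc2, hc3, rfl⟩
      exact zetaMinus_mem k (d * q') c (by nlinarith) hc1 hc2 hc3
    have := hconv hmem
    rwa [mul_comm d q'] at this
  · apply Vplus_le_of k q' hq'2
    intro a h1 h2 h3
    have hmem : zetaPlus k a q' ∈ Gspan (fun a q => zetaPlus k a q) (d * q') :=
      generic_lemma k hk _ (fun p b q'' hp hq'' => H1plus k p b q'' hp hq'')
        (fun p a' q'' hp h1' h2' => H2plus k hk p a' q'' hp h1' h2') d hd q' hq'2 a h1 h2 h3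
    have hconv : Gspan (fun a q => zetaPlus k a q) (d * q') ≤ Vplus k (d * q') := by
      rw [Gspan, Submodule.span_le]
      rintro x ⟨c, hc1, hc2, hc3, rfl⟩
      exact zetaPlus_mem k (d * q') c (by nlinarith) hc1 hc2 hc3
    have := hconv hmem
    rwa [mul_comm d q'] at this
  · rw [Vfull, Submodule.span_le]
    rintro x ⟨a, h1, h2, h3, rfl⟩
    have hmem : hzeta k ((a : ℝ) / q') ∈ Gspan (fun c qq => hzeta k ((c : ℝ) / qq)) (d * q') :=
      generic_lemma k hk _ (fun p b q'' hp hq'' => H1full k p b q'' hp hq'')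
        (fun p a' q'' hp h1' h2' => H2full k hk p a' q'' hp h1' h2') d hd q' hq'2 a h1 h2 h3
    have heq : Gspan (fun c qq => hzeta k ((c : ℝ) / qq)) (d * q') = Vfull k (d * q') := rfl
    rw [heq, mul_comm d q'] at hmem
    exact hmem
end
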